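/- If U is the n-sun, obtained from C_n by appending exactly one pendant leaf to every vertex of the cycle, then U has a unique perfect matching and mr^-(U) = 2n. -/

import Mathlib

open Matrix SimpleGraph

attribute [local instance] Classical.propDecidable

/-- The set of real skew-symmetric matrices whose off-diagonal zero-nonzero
pattern is described by the graph `G`. -/
def IsSkewRep {V : Type*} [Fintype V] (G : SimpleGraph V) (A : Matrix V V ℝ) : Prop :=
  Aᵀ = -A ∧ ∀ i j, i ≠ j → (A i j ≠ 0 ↔ G.Adj i j)

/-- The minimum skew rank of a simple graph. -/
noncomputable def minSkewRank {V : Type*} [Fintype V] (G : SimpleGraph V) : ℕ :=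
  sInf {r | ∃ A : Matrix V V ℝ, IsSkewRep G A ∧ A.rank = r}

/-- The maximum skew rank of a simple graph. -/
noncomputable def maxSkewRank {V : Type*} [Fintype V] (G : SimpleGraph V) : ℕ :=
  sSup {r | ∃ A : Matrix V V ℝ, IsSkewRep G A ∧ A.rank = r}

/-- The matching number of a simple graph. -/
noncomputable def matchNum {V : Type*} [Fintype V] (G : SimpleGraph V) : ℕ :=
  sSup {n | ∃ M : G.Subgraph, M.IsMatching ∧ M.edgeSet.ncard = n}

/-- The `n`-sun: the graph obtained from the cycle `Cₙ` by attaching one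
pendant leaf to every cycle vertex. -/
def sunGraph (n : ℕ) : SimpleGraph ((Fin n) ⊕ (Fin n)) :=
  SimpleGraph.fromRel (fun x y =>
    match x, y with
    | Sum.inl a, Sum.inl b => (cycleGraph n).Adj a b
    | Sum.inl a, Sum.inr b => a = b
    | _, _ => False)

lemma sun_adj_inr {n : ℕ} (a : Fin n) (j : Fin n ⊕ Fin n) :
    (sunGraph n).Adj (Sum.inr a) j ↔ j = Sum.inl a := by
  cases j with
  | inl b => simp [sunGraph, SimpleGraph.fromRel_adj, eq_comm]
  | inr b => simp [sunGraph, SimpleGraph.fromRel_adj]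

lemma sun_adj_inl_inr {n : ℕ} (a b : Fin n) :
    (sunGraph n).Adj (Sum.inl a) (Sum.inr b) ↔ a = b := by
  simp [sunGraph, SimpleGraph.fromRel_adj]

lemma rank_skewRep {n : ℕ} (A : Matrix (Fin n ⊕ Fin n) (Fin n ⊕ Fin n) ℝ)
    (hA : IsSkewRep (sunGraph n) A) : A.rank = 2 * n := by
  have hdiag : ∀ i, A i i = 0 := by
    intro i
    have := congrFun (congrFun hA.1 i) i
    simp only [Matrix.transpose_apply, Matrix.neg_apply] at this
    linarith
  have hzero : ∀ i j, ¬ (sunGraph n).Adj i j → A i j = 0 := by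
    intro i j hadj
    by_cases hij : i = j
    · subst hij; exact hdiag i
    · by_contra h; exact hadj ((hA.2 i j hij).mp h)
  have hdet : A.det ≠ 0 := by
    intro hd
    obtain ⟨v, hv0, hv⟩ := (Matrix.exists_mulVec_eq_zero_iff).mpr hd
    have hl : ∀ a, v (Sum.inl a) = 0 := by
      intro a
      have hrow := congrFun hv (Sum.inr a)
      rw [Matrix.mulVec, dotProduct] at hrow
      rw [Finset.sum_eq_single (Sum.inl a)] at hrow
      · have hAne : A (Sum.inr a) (Sum.inl a) ≠ 0 := by
          rw [hA.2 _ _ (by simp)]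
          exact (sun_adj_inr a _).mpr rfl
        simpa [hAne] using hrow
      · intro j _ hj
        rw [hzero _ _ (by rw [sun_adj_inr]; exact hj), zero_mul]
      · simp
    have hr : ∀ a, v (Sum.inr a) = 0 := by
      intro a
      have hrow := congrFun hv (Sum.inl a)
      rw [Matrix.mulVec, dotProduct] at hrow
      rw [Finset.sum_eq_single (Sum.inr a)] at hrow
      · have hAne : A (Sum.inl a) (Sum.inr a) ≠ 0 := by
          rw [hA.2 _ _ (by simp)]
          exact (sun_adj_inl_inr a a).mpr rfl
        simpa [hAne] using hrow
      · intro j _ hj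
        cases j with
        | inl b => rw [hl b, mul_zero]
        | inr b =>
          rw [hzero _ _ (by rw [sun_adj_inl_inr]; rintro rfl; exact hj rfl), zero_mul]
      · simp
    apply hv0
    funext j
    cases j with
    | inl a => exact hl a
    | inr a => exact hr a
  have : IsUnit A := by
    rw [Matrix.isUnit_iff_isUnit_det]
    exact isUnit_iff_ne_zero.mpr hdet
  rw [Matrix.rank_of_isUnit A this]
  simp [two_mul]

/-- The `n`-sun has a unique perfect matching, and its minimum skew rank is `2n`. -/
theorem minSkewRank_sun (n : ℕ) (hn : 3 ≤ n) :
    (∃! M : (sunGraph n).Subgraph, M.IsPerfectMatching) ∧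
      minSkewRank (sunGraph n) = 2 * n := by
  constructor
  · -- unique perfect matching
    refine ⟨{ verts := Set.univ
              Adj := fun x y => (∃ a, x = Sum.inl a ∧ y = Sum.inr a) ∨
                                (∃ a, x = Sum.inr a ∧ y = Sum.inl a)
              adj_sub := ?_
              edge_vert := fun _ => Set.mem_univ _
              symm := ?_ }, ⟨?_, fun v => Set.mem_univ v⟩, ?_⟩
    · rintro x y (⟨a, rfl, rfl⟩ | ⟨a, rfl, rfl⟩)
      · exact (sun_adj_inl_inr a a).mpr rfl
      · exact (sun_adj_inr a _).mpr rfl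
    · constructor
      rintro x y (⟨a, rfl, rfl⟩ | ⟨a, rfl, rfl⟩)
      · exact Or.inr ⟨a, rfl, rfl⟩
      · exact Or.inl ⟨a, rfl, rfl⟩
    · rintro v -
      cases v with
      | inl a =>
        refine ⟨Sum.inr a, Or.inl ⟨a, rfl, rfl⟩, ?_⟩
        rintro y (⟨b, hb, rfl⟩ | ⟨b, hb, rfl⟩)
        · cases hb; rfl
        · exact absurd hb (by simp)
      | inr a =>
        refine ⟨Sum.inl a, Or.inr ⟨a, rfl, rfl⟩, ?_⟩
        rintro y (⟨b, hb, rfl⟩ | ⟨b, hb, rfl⟩)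
        · exact absurd hb (by simp)
        · cases hb; rfl
    · intro M' hM'
      have hadjr : ∀ a, M'.Adj (Sum.inr a) (Sum.inl a) := by
        intro a
        obtain ⟨w, hw, -⟩ := hM'.1 (hM'.2 (Sum.inr a))
        have := (sun_adj_inr a w).mp (M'.adj_sub hw)
        rwa [this] at hw
      have huniql : ∀ a y, M'.Adj (Sum.inl a) y → y = Sum.inr a := by
        intro a y hy
        obtain ⟨w, hw, hu⟩ := hM'.1 (hM'.2 (Sum.inl a))
        rw [hu y hy, hu (Sum.inr a) (hadjr a).symm]
      have huniqr : ∀ a y, M'.Adj (Sum.inr a) y → y = Sum.inl a := by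
        intro a y hy
        exact (sun_adj_inr a y).mp (M'.adj_sub hy)
      ext x y
      · simp [hM'.2 x]
      · constructor
        · intro h
          cases x with
          | inl a => exact Or.inl ⟨a, rfl, (huniql a y h).symm ▸ rfl⟩
          | inr a => exact Or.inr ⟨a, rfl, (huniqr a y h).symm ▸ rfl⟩
        · rintro (⟨a, rfl, rfl⟩ | ⟨a, rfl, rfl⟩)
          · exact (hadjr a).symm
          · exact hadjr a
  · -- rank computation
    have hset : {r | ∃ A : Matrix (Fin n ⊕ Fin n) (Fin n ⊕ Fin n) ℝ,
        IsSkewRep (sunGraph n) A ∧ A.rank = r} = {2 * n} := by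
      ext r
      simp only [Set.mem_setOf_eq, Set.mem_singleton_iff]
      constructor
      · rintro ⟨A, hA, rfl⟩; exact rank_skewRep A hA
      · rintro rfl
        set emb : Fin n ⊕ Fin n → ℕ := Sum.elim (fun a => (a : ℕ)) (fun a => n + a) with hemb
        have hembinj : Function.Injective emb := by
          rintro (a | a) (b | b) h <;> simp [hemb] at h
          · exact congrArg Sum.inl (Fin.ext h)
          · exact absurd h (by have := a.isLt; omega)
          · exact absurd h (by have := b.isLt; omega)
          · exact congrArg Sum.inr (Fin.ext h)
        set B : Matrix (Fin n ⊕ Fin n) (Fin n ⊕ Fin n) ℝ :=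
          fun i j => if (sunGraph n).Adj i j then (if emb i < emb j then (1:ℝ) else -1) else 0
          with hB
        have hrep : IsSkewRep (sunGraph n) B := by
          constructor
          · ext i j
            simp only [Matrix.transpose_apply, Matrix.neg_apply]
            simp only [hB]
            by_cases h : (sunGraph n).Adj i j
            · have h' : (sunGraph n).Adj j i := h.symm
              have hne : emb i ≠ emb j := fun he => h.ne (hembinj he)
              rcases lt_or_gt_of_ne hne with hlt | hlt <;>
                simp [h, h', hlt, not_lt.mpr (le_of_lt hlt), lt_asymm hlt]
            · have h2 : ¬ (sunGraph n).Adj j i := fun h' => h h'.symm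
              simp [h, h2]
          · intro i j hij
            simp only [hB]
            by_cases h : (sunGraph n).Adj i j <;> simp [h]
            split <;> norm_num
        exact ⟨B, hrep, rank_skewRep B hrep⟩
    rw [minSkewRank, hset, csInf_singleton]
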